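/- Let N > 100 and let (x_1, …, x_N) be the unique strictly decreasing zero-mean solution of the MIW recursion. Then for every n with 1 ≤ n ≤ ⌊m/e³⌋, x_n ≥ (1/3)·√(2(1 + log(m/n))) and S_n ≥ (n/3)·√(2(1 + log(m/n))). -/

import Mathlib

noncomputable section

/-- Partial sums `S_n = x_1 + ⋯ + x_n`. -/
def Ssum (x : ℕ → ℝ) (n : ℕ) : ℝ := ∑ i ∈ Finset.Icc 1 n, x i

/-- `x` is a solution of the MIW recursion
`x_{n+1} = x_n - 1/(x_1 + ⋯ + x_n)` for `1 ≤ n ≤ N - 1`. -/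
def IsMIW (N : ℕ) (x : ℕ → ℝ) : Prop :=
  ∀ n, 1 ≤ n → n ≤ N - 1 → Ssum x n ≠ 0 ∧ x (n + 1) = x n - 1 / Ssum x n

/-- `m = (N+1)/2` if `N` is odd and `m = N/2` if `N` is even; in natural number
division both equal `(N+1)/2`. -/
def mIdx (N : ℕ) : ℕ := (N + 1) / 2

namespace MIWAux

/-- Partial sums of squares. -/
def Qsum (x : ℕ → ℝ) (n : ℕ) : ℝ := ∑ i ∈ Finset.Icc 1 n, (x i) ^ 2

lemma Ssum_zero (x : ℕ → ℝ) : Ssum x 0 = 0 := by simp [Ssum]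

lemma Ssum_one (x : ℕ → ℝ) : Ssum x 1 = x 1 := by simp [Ssum]

lemma Ssum_succ (x : ℕ → ℝ) (n : ℕ) : Ssum x (n + 1) = Ssum x n + x (n + 1) :=
  Finset.sum_Icc_succ_top (Nat.succ_le_succ (Nat.zero_le n)) x

lemma Qsum_succ (x : ℕ → ℝ) (n : ℕ) : Qsum x (n + 1) = Qsum x n + (x (n + 1)) ^ 2 :=
  Finset.sum_Icc_succ_top (Nat.succ_le_succ (Nat.zero_le n)) _

lemma sqrt_le_of_sq {a b : ℝ} (hb : 0 ≤ b) (h : a ≤ b ^ 2) : Real.sqrt a ≤ b := by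
  calc Real.sqrt a ≤ Real.sqrt (b ^ 2) := Real.sqrt_le_sqrt h
  _ = b := Real.sqrt_sq hb

lemma le_of_sq_le_sq {a b : ℝ} (ha : 0 ≤ a) (hb : 0 ≤ b) (h : a ^ 2 ≤ b ^ 2) : a ≤ b := by
  nlinarith [h, ha, hb]

lemma exp_three_gt : (20 : ℝ) < Real.exp 3 := by
  have h := Real.exp_one_gt_d9
  have h2 : (2.7182818283 : ℝ) ^ 3 ≤ Real.exp 1 ^ 3 :=
    pow_le_pow_left₀ (by norm_num) h.le 3
  have h3 : Real.exp 1 ^ 3 = Real.exp 3 := by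
    rw [← Real.exp_nat_mul]; norm_num
  rw [h3] at h2
  have h1 : (20 : ℝ) < 2.7182818283 ^ 3 := by norm_num
  linarith

lemma exp_139 : (3.9 : ℝ) ≤ Real.exp (13 / 9) := by
  have h1 := Real.exp_one_gt_d9
  have h2 : (13 : ℝ) / 9 = 1 + 4 / 9 := by norm_num
  rw [h2, Real.exp_add]
  have h3 : (1 : ℝ) + 4 / 9 ≤ Real.exp (4 / 9) := by
    have := Real.add_one_le_exp (4 / 9 : ℝ); linarith
  nlinarith [Real.exp_pos (4 / 9)]

lemma x_mono {N : ℕ} {x : ℕ → ℝ} (hdec : ∀ n, 1 ≤ n → n < N → x (n + 1) < x n) :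
    ∀ a b, 1 ≤ a → a ≤ b → b ≤ N → x b ≤ x a := by
  intro a b ha hab hbN
  induction b with
  | zero => exact absurd (ha.trans hab) (by omega)
  | succ b ih =>
    rcases Nat.lt_or_ge a (b + 1) with h | h
    · have h1 : a ≤ b := by omega
      have h2 : x (b + 1) < x b := hdec b (by omega) (by omega)
      exact h2.le.trans (ih h1 (by omega))
    · have he : a = b + 1 := by omega
      rw [he]

lemma Icc_one_eq_Ioc (n : ℕ) : Finset.Icc 1 n = Finset.Ioc 0 n := Finset.Icc_add_one_left_eq_Ioc 0 n

lemma S_pos {N : ℕ} {x : ℕ → ℝ} (hN : 2 ≤ N)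
    (hdec : ∀ n, 1 ≤ n → n < N → x (n + 1) < x n)
    (hmean : Ssum x N = 0) :
    ∀ n, 1 ≤ n → n ≤ N - 1 → 0 < Ssum x n := by
  intro n hn1 hn2
  have hnN : n < N := by omega
  have hmin : (n : ℝ) * x n ≤ Ssum x n := by
    have h := Finset.card_nsmul_le_sum (Finset.Icc 1 n) x (x n) (fun i hi => by
      rw [Finset.mem_Icc] at hi
      exact x_mono hdec i n hi.1 hi.2 (by omega))
    simpa [Ssum, Nat.card_Icc, nsmul_eq_mul] using h
  have hsplit : Ssum x n + ∑ i ∈ Finset.Ioc n N, x i = 0 := by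
    have h := Finset.sum_Ioc_consecutive x (Nat.zero_le n) hnN.le
    rw [Ssum, Icc_one_eq_Ioc, h, ← Icc_one_eq_Ioc, ← Ssum]
    exact hmean
  have htail : ∑ i ∈ Finset.Ioc n N, x i ≤ ((N : ℝ) - n) * x (n + 1) := by
    have h := Finset.sum_le_card_nsmul (Finset.Ioc n N) x (x (n + 1)) (fun i hi => by
      rw [Finset.mem_Ioc] at hi
      exact x_mono hdec (n + 1) i (by omega) hi.1 hi.2)
    rw [Nat.card_Ioc] at h
    have hc : ((N - n : ℕ) : ℝ) = (N : ℝ) - n := by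
      rw [Nat.cast_sub hnN.le]
    rw [nsmul_eq_mul, hc] at h
    exact h
  have hd := hdec n hn1 hnN
  have hcast : (1 : ℝ) ≤ (n : ℝ) := by exact_mod_cast hn1
  have hNn : 0 < (N : ℝ) - n := by
    have : (n : ℝ) < N := by exact_mod_cast hnN
    linarith
  nlinarith [hmin, htail, hsplit, hd, hNn, hcast, mul_lt_mul_of_pos_left hd hNn]

lemma comp_strict {N : ℕ} {x y : ℕ → ℝ}
    (hx : ∀ n, 1 ≤ n → n ≤ N - 1 → 0 < Ssum x n ∧ x (n + 1) = x n - 1 / Ssum x n)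
    (hy : ∀ n, 1 ≤ n → n ≤ N - 1 → 0 < Ssum y n ∧ y (n + 1) = y n - 1 / Ssum y n)
    (h1 : x 1 < y 1) : ∀ n, 1 ≤ n → n ≤ N → x n < y n ∧ Ssum x n < Ssum y n := by
  intro n
  induction n with
  | zero => intro h; exact absurd h (by omega)
  | succ n ih =>
    intro _ hn
    rcases Nat.eq_zero_or_pos n with rfl | hp
    · exact ⟨h1, by rw [Ssum_one, Ssum_one]; exact h1⟩
    · have hn' : n ≤ N - 1 := by omega
      obtain ⟨ihx, ihS⟩ := ih (by omega) (by omega)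
      obtain ⟨hxS, hxr⟩ := hx n hp hn'
      obtain ⟨hyS, hyr⟩ := hy n hp hn'
      have hinv : 1 / Ssum y n ≤ 1 / Ssum x n := one_div_le_one_div_of_le hxS ihS.le
      have hstep : x (n + 1) < y (n + 1) := by rw [hxr, hyr]; linarith
      exact ⟨hstep, by rw [Ssum_succ, Ssum_succ]; linarith⟩

lemma comp_eq {N : ℕ} (hN : 1 ≤ N) {x y : ℕ → ℝ}
    (hx : ∀ n, 1 ≤ n → n ≤ N - 1 → 0 < Ssum x n ∧ x (n + 1) = x n - 1 / Ssum x n)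
    (hy : ∀ n, 1 ≤ n → n ≤ N - 1 → 0 < Ssum y n ∧ y (n + 1) = y n - 1 / Ssum y n)
    (hx0 : Ssum x N = 0) (hy0 : Ssum y N = 0) :
    ∀ n, 1 ≤ n → n ≤ N → x n = y n := by
  have h1 : x 1 = y 1 := by
    rcases lt_trichotomy (x 1) (y 1) with h | h | h
    · have := (comp_strict hx hy h N hN le_rfl).2
      rw [hx0, hy0] at this
      exact absurd this (lt_irrefl 0)
    · exact h
    · have := (comp_strict hy hx h N hN le_rfl).2
      rw [hx0, hy0] at this
      exact absurd this (lt_irrefl 0)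
  have key : ∀ n, n ≤ N → (1 ≤ n → x n = y n) ∧ Ssum x n = Ssum y n := by
    intro n
    induction n with
    | zero =>
      intro _
      exact ⟨fun h => absurd h (by omega), by rw [Ssum_zero, Ssum_zero]⟩
    | succ n ih =>
      intro hn
      obtain ⟨ihx, ihS⟩ := ih (by omega)
      rcases Nat.eq_zero_or_pos n with rfl | hp
      · exact ⟨fun _ => h1, by rw [Ssum_one, Ssum_one]; exact h1⟩
      · have hn' : n ≤ N - 1 := by omega
        obtain ⟨hxS, hxr⟩ := hx n hp hn'
        obtain ⟨hyS, hyr⟩ := hy n hp hn'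
        have hxy := ihx hp
        have hx1 : x (n + 1) = y (n + 1) := by rw [hxr, hyr, hxy, ihS]
        exact ⟨fun _ => hx1, by rw [Ssum_succ, Ssum_succ, ihS, hx1]⟩
  intro n hn1 hn2
  exact (key n hn2).1 hn1

lemma Ssum_reflect {N : ℕ} {x : ℕ → ℝ} (h0 : Ssum x N = 0) :
    ∀ n, n ≤ N → Ssum (fun k => -x (N + 1 - k)) n = Ssum x (N - n) := by
  intro n hn
  have hsplit : Ssum x (N - n) + ∑ i ∈ Finset.Ioc (N - n) N, x i = 0 := by
    have h := Finset.sum_Ioc_consecutive x (Nat.zero_le (N - n)) (Nat.sub_le N n)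
    rw [Ssum, Icc_one_eq_Ioc, h, ← Icc_one_eq_Ioc, ← Ssum]
    exact h0
  have hre : ∑ i ∈ Finset.Icc 1 n, x (N + 1 - i) = ∑ j ∈ Finset.Ioc (N - n) N, x j := by
    apply Finset.sum_nbij' (fun i => N + 1 - i) (fun j => N + 1 - j)
    · intro a ha; rw [Finset.mem_Icc] at ha; rw [Finset.mem_Ioc]; omega
    · intro a ha; rw [Finset.mem_Ioc] at ha; rw [Finset.mem_Icc]; omega
    · intro a ha; rw [Finset.mem_Icc] at ha; omega
    · intro a ha; rw [Finset.mem_Ioc] at ha; omega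
    · intro a _; rfl
  have : Ssum (fun k => -x (N + 1 - k)) n = -∑ i ∈ Finset.Icc 1 n, x (N + 1 - i) := by
    rw [Ssum, Finset.sum_neg_distrib]
  rw [this, hre]
  linarith

lemma antisym {N : ℕ} {x : ℕ → ℝ} (hN : 2 ≤ N)
    (hx : ∀ n, 1 ≤ n → n ≤ N - 1 → 0 < Ssum x n ∧ x (n + 1) = x n - 1 / Ssum x n)
    (h0 : Ssum x N = 0) :
    ∀ n, 1 ≤ n → n ≤ N → x n = -x (N + 1 - n) := by
  have hSy := Ssum_reflect h0
  have hyrec : ∀ n, 1 ≤ n → n ≤ N - 1 →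
      0 < Ssum (fun k => -x (N + 1 - k)) n ∧
      (fun k => -x (N + 1 - k)) (n + 1) = (fun k => -x (N + 1 - k)) n - 1 / Ssum (fun k => -x (N + 1 - k)) n := by
    intro n h1 h2
    have hS := hSy n (by omega)
    obtain ⟨hSp, hrec⟩ := hx (N - n) (by omega) (by omega)
    constructor
    · rw [hS]; exact hSp
    · simp only
      rw [hS]
      have hi1 : N + 1 - (n + 1) = N - n := by omega
      have hi2 : N - n + 1 = N + 1 - n := by omega
      rw [hi1]
      rw [hi2] at hrec
      rw [hrec]
      ring
  have hy0 : Ssum (fun k => -x (N + 1 - k)) N = 0 := by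
    rw [hSy N le_rfl]
    simp [Ssum_zero]
  intro n h1 h2
  exact comp_eq (by omega) hx hyrec h0 hy0 n h1 h2

lemma SxQ {N : ℕ} {x : ℕ → ℝ}
    (hx : ∀ j, 1 ≤ j → j ≤ N - 1 → 0 < Ssum x j ∧ x (j + 1) = x j - 1 / Ssum x j) :
    ∀ n, 1 ≤ n → n ≤ N - 1 → Ssum x n * x (n + 1) = Qsum x n - n := by
  intro n
  induction n with
  | zero => intro h; exact absurd h (by omega)
  | succ n ih =>
    intro _ h2
    rcases Nat.eq_zero_or_pos n with rfl | hp
    · obtain ⟨hS, hr⟩ := hx 1 le_rfl (by omega)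
      rw [Ssum_one] at hS
      have hne : x 1 ≠ 0 := hS.ne'
      rw [hr, Ssum_one]
      have hQ1 : Qsum x 1 = x 1 ^ 2 := by simp [Qsum]
      rw [hQ1]
      push_cast
      field_simp
    · obtain ⟨hS, hr⟩ := hx (n + 1) (by omega) h2
      have ihe := ih hp (by omega)
      have key : Ssum x (n + 1) * x (n + 1 + 1) = Ssum x (n + 1) * x (n + 1) - 1 := by
        rw [hr]
        field_simp
      rw [key, Ssum_succ, Qsum_succ]
      push_cast
      linear_combination ihe

lemma Qsum_N {N : ℕ} {x : ℕ → ℝ} (hN : 2 ≤ N)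
    (hx : ∀ j, 1 ≤ j → j ≤ N - 1 → 0 < Ssum x j ∧ x (j + 1) = x j - 1 / Ssum x j)
    (h0 : Ssum x N = 0) : Qsum x N = (N : ℝ) - 1 := by
  have hid := SxQ hx (N - 1) (by omega) le_rfl
  have hN1 : N - 1 + 1 = N := by omega
  rw [hN1] at hid
  have hS : Ssum x N = Ssum x (N - 1) + x N := by
    have h := Ssum_succ x (N - 1); rwa [hN1] at h
  have hQ : Qsum x N = Qsum x (N - 1) + x N ^ 2 := by
    have h := Qsum_succ x (N - 1); rwa [hN1] at h
  have hcast : ((N - 1 : ℕ) : ℝ) = (N : ℝ) - 1 := by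
    rw [Nat.cast_sub (by omega : 1 ≤ N)]; norm_num
  rw [hcast] at hid
  have hSe : Ssum x (N - 1) = -x N := by rw [hS] at h0; linarith
  rw [hSe] at hid
  rw [hQ]
  linear_combination -hid

lemma Qsum_le {N : ℕ} {x : ℕ → ℝ} (hN : 2 ≤ N)
    (hx : ∀ j, 1 ≤ j → j ≤ N - 1 → 0 < Ssum x j ∧ x (j + 1) = x j - 1 / Ssum x j)
    (h0 : Ssum x N = 0) : ∀ k, k ≤ N → Qsum x k ≤ (N : ℝ) - 1 := by
  intro k hk
  have hQN := Qsum_N hN hx h0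
  have h : Qsum x k ≤ Qsum x N :=
    Finset.sum_le_sum_of_subset_of_nonneg (Finset.Icc_subset_Icc_right hk)
      (fun i _ _ => sq_nonneg _)
  linarith

lemma CS (x : ℕ → ℝ) (k : ℕ) : (Ssum x k) ^ 2 ≤ (k : ℝ) * Qsum x k := by
  have h := Finset.sum_mul_sq_le_sq_mul_sq (Finset.Icc 1 k) (fun _ => (1 : ℝ)) x
  simp only [one_mul, one_pow, Finset.sum_const, Nat.card_Icc, nsmul_eq_mul, mul_one] at h
  have hc : (k + 1 - 1 : ℕ) = k := by omega
  rw [hc] at h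
  exact h

lemma telescope {N : ℕ} {x : ℕ → ℝ}
    (hx : ∀ j, 1 ≤ j → j ≤ N - 1 → 0 < Ssum x j ∧ x (j + 1) = x j - 1 / Ssum x j) :
    ∀ n M, 1 ≤ n → n ≤ M → M ≤ N →
      x n = x M + ∑ k ∈ Finset.Ico n M, 1 / Ssum x k := by
  intro n M h1 h2
  induction M, h2 using Nat.le_induction with
  | base => intro _; simp
  | succ M hnM ih =>
    intro hMN
    have hrec := (hx M (by omega) (by omega)).2
    rw [Finset.sum_Ico_succ_top hnM, hrec]
    have := ih (by omega)
    linarith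

lemma energy_step {N : ℕ} {x : ℕ → ℝ}
    (hx : ∀ j, 1 ≤ j → j ≤ N - 1 → 0 < Ssum x j ∧ x (j + 1) = x j - 1 / Ssum x j)
    (k : ℕ) (hk1 : 1 ≤ k) (hk2 : k + 1 ≤ N - 1) :
    x (k + 1) ^ 2 + 2 * Real.log (Ssum x (k + 1)) ≤ x k ^ 2 + 2 * Real.log (Ssum x k) := by
  obtain ⟨hS, hrec⟩ := hx k hk1 (by omega)
  have hS1 : 0 < Ssum x (k + 1) := (hx (k + 1) (by omega) hk2).1
  have hlog : Real.log (Ssum x (k + 1)) - Real.log (Ssum x k) ≤ x (k + 1) / Ssum x k := by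
    rw [← Real.log_div hS1.ne' hS.ne']
    have h := Real.log_le_sub_one_of_pos (div_pos hS1 hS)
    have heq : Ssum x (k + 1) / Ssum x k - 1 = x (k + 1) / Ssum x k := by
      rw [Ssum_succ]; field_simp; ring
    rwa [heq] at h
  have hdiff : x (k + 1) - x k = -(1 / Ssum x k) := by rw [hrec]; ring
  have hsq : x (k + 1) ^ 2 - x k ^ 2 = -(1 / Ssum x k) * (x (k + 1) + x k) := by
    linear_combination (x (k + 1) + x k) * hdiff
  have hkey : -(1 / Ssum x k) * (x (k + 1) + x k) + 2 * (x (k + 1) / Ssum x k)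
      = -(1 / Ssum x k * (1 / Ssum x k)) := by
    rw [hrec]; field_simp; ring
  have hpos : 0 < 1 / Ssum x k * (1 / Ssum x k) := by positivity
  linarith

lemma energy_chain {N : ℕ} {x : ℕ → ℝ}
    (hx : ∀ j, 1 ≤ j → j ≤ N - 1 → 0 < Ssum x j ∧ x (j + 1) = x j - 1 / Ssum x j) :
    ∀ n M, 1 ≤ n → n ≤ M → M ≤ N - 1 →
      x M ^ 2 + 2 * Real.log (Ssum x M) ≤ x n ^ 2 + 2 * Real.log (Ssum x n) := by
  intro n M h1 h2
  induction M, h2 using Nat.le_induction with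
  | base => intro _; exact le_rfl
  | succ M hnM ih =>
    intro hMN
    have hstep := energy_step hx M (by omega) hMN
    exact hstep.trans (ih (by omega))

lemma round1 {N : ℕ} {x : ℕ → ℝ} (hN : 100 < N)
    (hx : ∀ j, 1 ≤ j → j ≤ N - 1 → 0 < Ssum x j ∧ x (j + 1) = x j - 1 / Ssum x j)
    (hQ : ∀ k, k ≤ N → Qsum x k ≤ (N : ℝ) - 1) (hxm : 0 ≤ x (mIdx N)) :
    ∀ n, 1 ≤ n → n ≤ mIdx N →
      Real.sqrt 2 * (Real.sqrt (mIdx N : ℝ) - Real.sqrt (n : ℝ)) / Real.sqrt (mIdx N : ℝ) ≤ x n := by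
  intro n h1 h2
  set m : ℕ := mIdx N with hm
  have hmval : m = (N + 1) / 2 := rfl
  have hmN : m ≤ N - 1 := by omega
  have hm1 : (1 : ℝ) ≤ (m : ℝ) := by exact_mod_cast (by omega : 1 ≤ m)
  have htel := telescope hx n m h1 h2 (by omega)
  have hterm : ∀ k ∈ Finset.Ico n m,
      2 / Real.sqrt (2 * (m : ℝ)) * (Real.sqrt ((k + 1 : ℕ) : ℝ) - Real.sqrt (k : ℝ)) ≤ 1 / Ssum x k := by
    intro k hk
    rw [Finset.mem_Ico] at hk
    have hk1 : 1 ≤ k := le_trans h1 hk.1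
    have hkN : k ≤ N - 1 := by omega
    have hk0 : (0 : ℝ) < (k : ℝ) := by exact_mod_cast hk1
    have hSk := (hx k hk1 hkN).1
    have hN2m : (N : ℝ) ≤ 2 * (m : ℝ) := by exact_mod_cast (by omega : N ≤ 2 * m)
    have hQk := hQ k (by omega)
    have hCSk := CS x k
    have hSk2 : Ssum x k ≤ Real.sqrt (2 * (m : ℝ)) * Real.sqrt (k : ℝ) := by
      rw [← Real.sqrt_mul (by positivity) (k : ℝ), ← Real.sqrt_sq hSk.le]
      apply Real.sqrt_le_sqrt
      nlinarith [hk0.le, mul_le_mul_of_nonneg_left hQk hk0.le,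
        mul_le_mul_of_nonneg_left (show (N : ℝ) - 1 ≤ 2 * (m : ℝ) by linarith) hk0.le]
    have hcast : ((k + 1 : ℕ) : ℝ) = (k : ℝ) + 1 := by push_cast; ring
    have ha2 : Real.sqrt (k : ℝ) ^ 2 = (k : ℝ) := Real.sq_sqrt hk0.le
    have hb2 : Real.sqrt ((k + 1 : ℕ) : ℝ) ^ 2 = Real.sqrt (k : ℝ) ^ 2 + 1 := by
      rw [hcast, Real.sq_sqrt (by positivity), ha2]
    have hab : Real.sqrt (k : ℝ) ≤ Real.sqrt ((k + 1 : ℕ) : ℝ) :=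
      Real.sqrt_le_sqrt (by rw [hcast]; linarith)
    have hksq : 2 * (Real.sqrt ((k + 1 : ℕ) : ℝ) - Real.sqrt (k : ℝ)) * Real.sqrt (k : ℝ) ≤ 1 := by
      nlinarith [sq_nonneg (Real.sqrt (k : ℝ) - Real.sqrt ((k + 1 : ℕ) : ℝ)), hb2]
    have hsm : (0 : ℝ) < Real.sqrt (2 * (m : ℝ)) := Real.sqrt_pos.2 (by positivity)
    have hsk : (0 : ℝ) < Real.sqrt (k : ℝ) := Real.sqrt_pos.2 hk0
    have h1k : 1 / (Real.sqrt (2 * (m : ℝ)) * Real.sqrt (k : ℝ)) ≤ 1 / Ssum x k :=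
      one_div_le_one_div_of_le hSk hSk2
    have h2k : 2 / Real.sqrt (2 * (m : ℝ)) * (Real.sqrt ((k + 1 : ℕ) : ℝ) - Real.sqrt (k : ℝ))
        ≤ 1 / (Real.sqrt (2 * (m : ℝ)) * Real.sqrt (k : ℝ)) := by
      rw [div_mul_eq_mul_div, div_le_div_iff₀ hsm (by positivity)]
      calc 2 * (Real.sqrt ((k + 1 : ℕ) : ℝ) - Real.sqrt (k : ℝ)) * (Real.sqrt (2 * (m : ℝ)) * Real.sqrt (k : ℝ))
          = (2 * (Real.sqrt ((k + 1 : ℕ) : ℝ) - Real.sqrt (k : ℝ)) * Real.sqrt (k : ℝ)) * Real.sqrt (2 * (m : ℝ)) := by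
            ring
        _ ≤ 1 * Real.sqrt (2 * (m : ℝ)) := mul_le_mul_of_nonneg_right hksq hsm.le
    linarith
  have hsum := Finset.sum_le_sum hterm
  have htele : ∑ k ∈ Finset.Ico n m,
      (2 / Real.sqrt (2 * (m : ℝ)) * (Real.sqrt ((k + 1 : ℕ) : ℝ) - Real.sqrt (k : ℝ)))
      = 2 / Real.sqrt (2 * (m : ℝ)) * (Real.sqrt (m : ℝ) - Real.sqrt (n : ℝ)) := by
    rw [← Finset.mul_sum]
    congr 1
    rw [Finset.sum_Ico_eq_sub _ h2, Finset.sum_range_sub (fun k : ℕ => Real.sqrt (k : ℝ)),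
        Finset.sum_range_sub (fun k : ℕ => Real.sqrt (k : ℝ))]
    simp
  rw [htele] at hsum
  have hge : 2 / Real.sqrt (2 * (m : ℝ)) * (Real.sqrt (m : ℝ) - Real.sqrt (n : ℝ)) ≤ x n := by
    linarith
  have h2m : Real.sqrt (2 * (m : ℝ)) = Real.sqrt 2 * Real.sqrt (m : ℝ) := Real.sqrt_mul (by norm_num) _
  have hsmp : (0 : ℝ) < Real.sqrt (m : ℝ) := Real.sqrt_pos.2 (by linarith)
  have hs2 : Real.sqrt 2 * Real.sqrt 2 = 2 := Real.mul_self_sqrt (by norm_num)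
  have heq : 2 / Real.sqrt (2 * (m : ℝ)) = Real.sqrt 2 / Real.sqrt (m : ℝ) := by
    rw [h2m, div_eq_div_iff (by positivity) hsmp.ne']
    nlinarith [hs2]
  calc Real.sqrt 2 * (Real.sqrt (m : ℝ) - Real.sqrt (n : ℝ)) / Real.sqrt (m : ℝ)
      = Real.sqrt 2 / Real.sqrt (m : ℝ) * (Real.sqrt (m : ℝ) - Real.sqrt (n : ℝ)) := by ring
    _ = 2 / Real.sqrt (2 * (m : ℝ)) * (Real.sqrt (m : ℝ) - Real.sqrt (n : ℝ)) := by rw [heq]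
    _ ≤ x n := hge

lemma Sm_lower {N : ℕ} {x : ℕ → ℝ} (hN : 100 < N)
    (hx : ∀ j, 1 ≤ j → j ≤ N - 1 → 0 < Ssum x j ∧ x (j + 1) = x j - 1 / Ssum x j)
    (hQ : ∀ k, k ≤ N → Qsum x k ≤ (N : ℝ) - 1) (hxm : 0 ≤ x (mIdx N)) :
    Real.sqrt 2 * ((mIdx N : ℝ) - 4) / 3 ≤ Ssum x (mIdx N) := by
  set m : ℕ := mIdx N with hm
  have hmval : m = (N + 1) / 2 := rfl
  have hm51 : 51 ≤ m := by omega
  have hm1 : (51 : ℝ) ≤ (m : ℝ) := by exact_mod_cast hm51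
  have hr1 := round1 hN hx hQ hxm
  have hsum1 : ∑ j ∈ Finset.Icc 1 m,
      (Real.sqrt 2 * (Real.sqrt (m : ℝ) - Real.sqrt (j : ℝ)) / Real.sqrt (m : ℝ)) ≤ Ssum x m := by
    rw [Ssum]
    apply Finset.sum_le_sum
    intro j hj
    rw [Finset.mem_Icc] at hj
    exact hr1 j hj.1 hj.2
  have hsq : ∀ j ∈ Finset.Icc 1 m, Real.sqrt (j : ℝ)
      ≤ 2 / 3 * (((j + 1 : ℕ) : ℝ) * Real.sqrt ((j + 1 : ℕ) : ℝ) - (j : ℝ) * Real.sqrt (j : ℝ)) := by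
    intro j hj
    rw [Finset.mem_Icc] at hj
    have hj0 : (1 : ℝ) ≤ (j : ℝ) := by exact_mod_cast hj.1
    have hcast : ((j + 1 : ℕ) : ℝ) = (j : ℝ) + 1 := by push_cast; ring
    set a := Real.sqrt (j : ℝ) with hadef
    set b := Real.sqrt ((j + 1 : ℕ) : ℝ) with hbdef
    have ha2 : a ^ 2 = (j : ℝ) := Real.sq_sqrt (by linarith)
    have hb2' : b ^ 2 = (j : ℝ) + 1 := by rw [hbdef, hcast]; exact Real.sq_sqrt (by linarith)
    have hb2 : b ^ 2 = a ^ 2 + 1 := by rw [hb2', ha2]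
    have ha1 : 1 ≤ a := by
      rw [show (1 : ℝ) = Real.sqrt 1 from (Real.sqrt_one).symm]
      exact Real.sqrt_le_sqrt hj0
    have hab : a ≤ b := by
      rw [hadef, hbdef]
      exact Real.sqrt_le_sqrt (by rw [hcast]; linarith)
    have hkey : 3 * a ≤ 2 * (b ^ 3 - a ^ 3) := by
      have hb3 : b ^ 3 = (a ^ 2 + 1) * b := by rw [pow_succ, hb2]
      nlinarith [hb3, hb2, mul_pos (by linarith : (0 : ℝ) < a) (by linarith : (0 : ℝ) < b),
        sq_nonneg (a - b), sq_nonneg (a + b)]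
    have e1 : ((j + 1 : ℕ) : ℝ) * b = b ^ 3 := by rw [hcast, ← hb2']; ring
    have e2 : (j : ℝ) * a = a ^ 3 := by rw [← ha2]; ring
    rw [e1, e2]
    linarith
  have hsumsq := Finset.sum_le_sum hsq
  have htel2 : ∑ j ∈ Finset.Icc 1 m,
      (2 / 3 * (((j + 1 : ℕ) : ℝ) * Real.sqrt ((j + 1 : ℕ) : ℝ) - (j : ℝ) * Real.sqrt (j : ℝ)))
      = 2 / 3 * (((m + 1 : ℕ) : ℝ) * Real.sqrt ((m + 1 : ℕ) : ℝ) - 1) := by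
    rw [← Finset.mul_sum]
    congr 1
    rw [← Finset.Ico_add_one_right_eq_Icc, Finset.sum_Ico_eq_sub _ (by omega : 1 ≤ m + 1),
        Finset.sum_range_sub (fun k : ℕ => (k : ℝ) * Real.sqrt (k : ℝ)),
        Finset.sum_range_sub (fun k : ℕ => (k : ℝ) * Real.sqrt (k : ℝ))]
    simp
  rw [htel2] at hsumsq
  -- abbreviations
  have hcastm : ((m + 1 : ℕ) : ℝ) = (m : ℝ) + 1 := by push_cast; ring
  set a := Real.sqrt (m : ℝ) with hadef
  set b := Real.sqrt ((m + 1 : ℕ) : ℝ) with hbdef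
  have ha2 : a ^ 2 = (m : ℝ) := Real.sq_sqrt (by linarith)
  have hb2' : b ^ 2 = (m : ℝ) + 1 := by rw [hbdef, hcastm]; exact Real.sq_sqrt (by linarith)
  have hb2 : b ^ 2 = a ^ 2 + 1 := by rw [hb2', ha2]
  have ha1 : 1 ≤ a := by
    rw [show (1 : ℝ) = Real.sqrt 1 from (Real.sqrt_one).symm]
    exact Real.sqrt_le_sqrt (by linarith)
  have hab : a ≤ b := by
    rw [hadef, hbdef]
    exact Real.sqrt_le_sqrt (by rw [hcastm]; linarith)
  have h3a : (0 : ℝ) < a := by linarith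
  have hmain : b ^ 3 ≤ a ^ 3 + 2 * a + 1 := by
    have hb3 : b ^ 3 = (a ^ 2 + 1) * b := by rw [pow_succ, hb2]
    nlinarith [hb3, hb2, mul_pos h3a (by linarith : (0 : ℝ) < b),
      sq_nonneg (a - b), sq_nonneg (a + b)]
  have hfactor : ∑ j ∈ Finset.Icc 1 m,
      (Real.sqrt 2 * (Real.sqrt (m : ℝ) - Real.sqrt (j : ℝ)) / Real.sqrt (m : ℝ))
      = Real.sqrt 2 / a * ((m : ℝ) * a - ∑ j ∈ Finset.Icc 1 m, Real.sqrt (j : ℝ)) := by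
    have hre : ∀ j ∈ Finset.Icc 1 m, Real.sqrt 2 * (Real.sqrt (m : ℝ) - Real.sqrt (j : ℝ)) / Real.sqrt (m : ℝ)
        = Real.sqrt 2 / a * a - Real.sqrt 2 / a * Real.sqrt (j : ℝ) := by
      intro j _; rw [hadef]; ring
    rw [Finset.sum_congr rfl hre, Finset.sum_sub_distrib, Finset.sum_const, ← Finset.mul_sum,
        Nat.card_Icc]
    have hc : (m + 1 - 1 : ℕ) = m := by omega
    rw [hc, nsmul_eq_mul]
    ring
  have hmb : ((m + 1 : ℕ) : ℝ) * b = b ^ 2 * b := by rw [hb2', hcastm]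
  rw [hmb] at hsumsq
  have hZ : Real.sqrt 2 / a * ((m : ℝ) * a - 2 / 3 * (b ^ 2 * b - 1)) ≤ Ssum x m := by
    calc Real.sqrt 2 / a * ((m : ℝ) * a - 2 / 3 * (b ^ 2 * b - 1))
        ≤ Real.sqrt 2 / a * ((m : ℝ) * a - ∑ j ∈ Finset.Icc 1 m, Real.sqrt (j : ℝ)) := by
          apply mul_le_mul_of_nonneg_left _ (by positivity)
          linarith
      _ = ∑ j ∈ Finset.Icc 1 m,
            (Real.sqrt 2 * (Real.sqrt (m : ℝ) - Real.sqrt (j : ℝ)) / Real.sqrt (m : ℝ)) := hfactor.symm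
      _ ≤ Ssum x m := hsum1
  refine le_trans ?_ hZ
  rw [← ha2]
  rw [div_mul_eq_mul_div, div_le_div_iff₀ (by norm_num : (0 : ℝ) < 3) h3a]
  nlinarith [hmain, Real.sqrt_nonneg 2]

end MIWAux

set_option maxHeartbeats 1600000 in
theorem xn_Sn_lower_bounds (N : ℕ) (hN : 100 < N) (x : ℕ → ℝ)
    (hMIW : IsMIW N x) (hdec : ∀ n, 1 ≤ n → n < N → x (n + 1) < x n)
    (hmean : ∑ i ∈ Finset.Icc 1 N, x i = 0) :
    ∀ n, 1 ≤ n → n ≤ Nat.floor ((mIdx N : ℝ) / Real.exp 3) →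
      x n ≥ (1 / 3) * Real.sqrt (2 * (1 + Real.log ((mIdx N : ℝ) / (n : ℝ)))) ∧
      Ssum x n ≥ ((n : ℝ) / 3) * Real.sqrt (2 * (1 + Real.log ((mIdx N : ℝ) / (n : ℝ)))) := by
  intro n hn1 hnfl
  have hSN : Ssum x N = 0 := hmean
  have hN2 : 2 ≤ N := by omega
  have hmval : mIdx N = (N + 1) / 2 := rfl
  have hm51 : 51 ≤ mIdx N := by omega
  have hmN1 : mIdx N ≤ N - 1 := by omega
  have hSpos := MIWAux.S_pos hN2 hdec hSN
  have hsys : ∀ k, 1 ≤ k → k ≤ N - 1 → 0 < Ssum x k ∧ x (k + 1) = x k - 1 / Ssum x k :=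
    fun k h1 h2 => ⟨hSpos k h1 h2, (hMIW k h1 h2).2⟩
  have hmpos : (0 : ℝ) < (mIdx N : ℝ) := by exact_mod_cast (by omega : 0 < mIdx N)
  have hfl : (n : ℝ) ≤ (mIdx N : ℝ) / Real.exp 3 :=
    le_trans (by exact_mod_cast hnfl) (Nat.floor_le (by positivity))
  have hexp3 := MIWAux.exp_three_gt
  have hne3 : (n : ℝ) * Real.exp 3 ≤ (mIdx N : ℝ) := by
    rw [← le_div_iff₀ (Real.exp_pos 3)]; exact hfl
  have hn0 : (0 : ℝ) < (n : ℝ) := by exact_mod_cast hn1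
  have h20 : 20 * (n : ℝ) ≤ (mIdx N : ℝ) := by nlinarith
  have hnm : n < mIdx N := by
    have : (n : ℝ) < (mIdx N : ℝ) := by linarith
    exact_mod_cast this
  have hanti := MIWAux.antisym hN2 hsys hSN
  have hxm0 : 0 ≤ x (mIdx N) := by
    have h := hanti (mIdx N) (by omega) (by omega)
    have h2 : x (N + 1 - mIdx N) ≤ x (mIdx N) :=
      MIWAux.x_mono hdec (mIdx N) (N + 1 - mIdx N) (by omega) (by omega) (by omega)
    linarith
  have hxn0 : 0 ≤ x n :=
    le_trans hxm0 (MIWAux.x_mono hdec n (mIdx N) hn1 hnm.le (by omega))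
  have hQle := MIWAux.Qsum_le hN2 hsys hSN
  have hmne : (mIdx N : ℝ) ≠ 0 := ne_of_gt hmpos
  have hnne : (n : ℝ) ≠ 0 := ne_of_gt hn0
  have hL0 : 0 ≤ Real.log ((mIdx N : ℝ) / (n : ℝ)) :=
    Real.log_nonneg (by rw [le_div_iff₀ hn0]; linarith)
  have hxbound : 1 / 3 * Real.sqrt (2 * (1 + Real.log ((mIdx N : ℝ) / (n : ℝ)))) ≤ x n := by
    rcases le_or_gt (mIdx N : ℝ) ((n : ℝ) * Real.exp 4) with hA | hB
    · -- Case A : m ≤ n e⁴, so log(m/n) ≤ 4; use the telescoping bound.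
      have hL4 : Real.log ((mIdx N : ℝ) / (n : ℝ)) ≤ 4 := by
        have hd : (mIdx N : ℝ) / n ≤ Real.exp 4 := by rw [div_le_iff₀ hn0]; linarith
        calc Real.log ((mIdx N : ℝ) / (n : ℝ)) ≤ Real.log (Real.exp 4) :=
              Real.log_le_log (by positivity) hd
          _ = 4 := Real.log_exp 4
      have h10 : Real.sqrt (2 * (1 + Real.log ((mIdx N : ℝ) / (n : ℝ)))) ≤ 9 / 4 * Real.sqrt 2 := by
        apply MIWAux.sqrt_le_of_sq (by positivity)
        have he : (9 / 4 * Real.sqrt 2) ^ 2 = 81 / 8 := by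
          rw [mul_pow, Real.sq_sqrt (by norm_num : (0 : ℝ) ≤ 2)]; norm_num
        rw [he]; linarith
      have hr1 := MIWAux.round1 hN hsys hQle hxm0 n hn1 hnm.le
      have h16 : (16 : ℝ) * n ≤ (mIdx N : ℝ) := by linarith
      have hsn : 4 * Real.sqrt (n : ℝ) ≤ Real.sqrt (mIdx N : ℝ) := by
        have h := Real.sqrt_le_sqrt h16
        rwa [show (16 : ℝ) * n = (4 : ℝ) ^ 2 * n by norm_num,
            Real.sqrt_mul (by positivity) (n : ℝ),
            Real.sqrt_sq (by norm_num : (0 : ℝ) ≤ 4)] at h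
      have hsm : (0 : ℝ) < Real.sqrt (mIdx N : ℝ) := Real.sqrt_pos.2 hmpos
      have hs2 : (0 : ℝ) ≤ Real.sqrt 2 := Real.sqrt_nonneg 2
      have hfrac : (3 : ℝ) / 4 ≤ (Real.sqrt (mIdx N : ℝ) - Real.sqrt (n : ℝ)) / Real.sqrt (mIdx N : ℝ) := by
        rw [le_div_iff₀ hsm]
        nlinarith [Real.sqrt_nonneg (n : ℝ)]
      have h34 : 3 / 4 * Real.sqrt 2
          ≤ Real.sqrt 2 * (Real.sqrt (mIdx N : ℝ) - Real.sqrt (n : ℝ)) / Real.sqrt (mIdx N : ℝ) := by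
        calc 3 / 4 * Real.sqrt 2
            ≤ (Real.sqrt (mIdx N : ℝ) - Real.sqrt (n : ℝ)) / Real.sqrt (mIdx N : ℝ) * Real.sqrt 2 :=
              mul_le_mul_of_nonneg_right hfrac hs2
          _ = Real.sqrt 2 * (Real.sqrt (mIdx N : ℝ) - Real.sqrt (n : ℝ)) / Real.sqrt (mIdx N : ℝ) := by
              ring
      calc 1 / 3 * Real.sqrt (2 * (1 + Real.log ((mIdx N : ℝ) / (n : ℝ))))
          ≤ 1 / 3 * (9 / 4 * Real.sqrt 2) := by linarith
        _ = 3 / 4 * Real.sqrt 2 := by ring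
        _ ≤ Real.sqrt 2 * (Real.sqrt (mIdx N : ℝ) - Real.sqrt (n : ℝ)) / Real.sqrt (mIdx N : ℝ) := h34
        _ ≤ x n := hr1
    · -- Case B : n e⁴ < m; use the energy argument.
      have hm51' : (51 : ℝ) ≤ (mIdx N : ℝ) := by exact_mod_cast hm51
      have hSm := MIWAux.Sm_lower hN hsys hQle hxm0
      have hSmpos : 0 < Ssum x (mIdx N) := hSpos (mIdx N) (by omega) hmN1
      have hSnpos : 0 < Ssum x n := hSpos n hn1 (by omega)
      have hSn2 : (Ssum x n) ^ 2 ≤ 2 * (mIdx N : ℝ) * n := by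
        have hCSn := MIWAux.CS x n
        have hQn := hQle n (by omega)
        have hN2m : (N : ℝ) ≤ 2 * (mIdx N : ℝ) := by exact_mod_cast (by omega : N ≤ 2 * mIdx N)
        nlinarith [mul_le_mul_of_nonneg_left hQn hn0.le,
          mul_le_mul_of_nonneg_left (show (N : ℝ) - 1 ≤ 2 * (mIdx N : ℝ) by linarith) hn0.le]
      have hk : 3 * (mIdx N : ℝ) ≤ ((mIdx N : ℝ) - 4) * Real.exp (13 / 9) := by
        have he := MIWAux.exp_139
        nlinarith [Real.exp_pos (13 / 9 : ℝ)]
      have h26 : (3 : ℝ) ^ 18 * (mIdx N : ℝ) ^ 18 ≤ ((mIdx N : ℝ) - 4) ^ 18 * Real.exp 26 := by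
        have hp := pow_le_pow_left₀ (by positivity) hk 18
        calc (3 : ℝ) ^ 18 * (mIdx N : ℝ) ^ 18 = (3 * (mIdx N : ℝ)) ^ 18 := by ring
          _ ≤ (((mIdx N : ℝ) - 4) * Real.exp (13 / 9)) ^ 18 := hp
          _ = ((mIdx N : ℝ) - 4) ^ 18 * Real.exp (13 / 9) ^ 18 := by ring
          _ = ((mIdx N : ℝ) - 4) ^ 18 * Real.exp 26 := by
              rw [← Real.exp_nat_mul]; norm_num
      have hn7 : (n : ℝ) ^ 7 * Real.exp 28 ≤ (mIdx N : ℝ) ^ 7 := by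
        have hp := pow_le_pow_left₀ (by positivity) hB.le 7
        calc (n : ℝ) ^ 7 * Real.exp 28 = ((n : ℝ) * Real.exp 4) ^ 7 := by
              rw [mul_pow, ← Real.exp_nat_mul]; norm_num
          _ ≤ (mIdx N : ℝ) ^ 7 := hp
      have hcore : 3 ^ 18 * Real.exp 1 ^ 2 * (mIdx N : ℝ) ^ 11 * (n : ℝ) ^ 7
          ≤ ((mIdx N : ℝ) - 4) ^ 18 := by
        rw [← mul_le_mul_iff_of_pos_right (Real.exp_pos 26)]
        have hee : Real.exp 1 ^ 2 * Real.exp 26 = Real.exp 28 := by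
          rw [← Real.exp_nat_mul, ← Real.exp_add]; norm_num
        calc 3 ^ 18 * Real.exp 1 ^ 2 * (mIdx N : ℝ) ^ 11 * (n : ℝ) ^ 7 * Real.exp 26
            = 3 ^ 18 * (mIdx N : ℝ) ^ 11 * ((n : ℝ) ^ 7 * (Real.exp 1 ^ 2 * Real.exp 26)) := by ring
          _ = 3 ^ 18 * (mIdx N : ℝ) ^ 11 * ((n : ℝ) ^ 7 * Real.exp 28) := by rw [hee]
          _ ≤ 3 ^ 18 * (mIdx N : ℝ) ^ 11 * (mIdx N : ℝ) ^ 7 :=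
              mul_le_mul_of_nonneg_left hn7 (by positivity)
          _ = 3 ^ 18 * (mIdx N : ℝ) ^ 18 := by ring
          _ ≤ ((mIdx N : ℝ) - 4) ^ 18 * Real.exp 26 := h26
      have hApos : (0 : ℝ) < Ssum x (mIdx N) ^ 9 * n := mul_pos (pow_pos hSmpos 9) hn0
      have hBpos : (0 : ℝ) < Real.exp 1 * (Ssum x n ^ 9 * (mIdx N : ℝ)) :=
        mul_pos (Real.exp_pos 1) (mul_pos (pow_pos hSnpos 9) hmpos)
      have h0Sm : (0 : ℝ) ≤ Real.sqrt 2 * ((mIdx N : ℝ) - 4) / 3 :=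
        div_nonneg (mul_nonneg (Real.sqrt_nonneg 2) (by linarith)) (by norm_num)
      have hSm18 : (Real.sqrt 2 * ((mIdx N : ℝ) - 4) / 3) ^ 18 ≤ Ssum x (mIdx N) ^ 18 :=
        pow_le_pow_left₀ h0Sm hSm 18
      have hSm18' : (2 : ℝ) ^ 9 * ((mIdx N : ℝ) - 4) ^ 18 / 3 ^ 18 ≤ Ssum x (mIdx N) ^ 18 := by
        have he : (Real.sqrt 2 * ((mIdx N : ℝ) - 4) / 3) ^ 18
            = (Real.sqrt 2 ^ 2) ^ 9 * ((mIdx N : ℝ) - 4) ^ 18 / 3 ^ 18 := by ring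
        rw [he, Real.sq_sqrt (by norm_num : (0 : ℝ) ≤ 2)] at hSm18
        exact hSm18
      have hSn18 : Ssum x n ^ 18 ≤ (2 * (mIdx N : ℝ) * n) ^ 9 := by
        have hp := pow_le_pow_left₀ (sq_nonneg (Ssum x n)) hSn2 9
        calc Ssum x n ^ 18 = (Ssum x n ^ 2) ^ 9 := by ring
          _ ≤ (2 * (mIdx N : ℝ) * n) ^ 9 := hp
      have hsq2 : (Real.exp 1 * (Ssum x n ^ 9 * (mIdx N : ℝ))) ^ 2
          ≤ (Ssum x (mIdx N) ^ 9 * (n : ℝ)) ^ 2 := by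
        calc (Real.exp 1 * (Ssum x n ^ 9 * (mIdx N : ℝ))) ^ 2
            = Real.exp 1 ^ 2 * Ssum x n ^ 18 * (mIdx N : ℝ) ^ 2 := by ring
          _ ≤ Real.exp 1 ^ 2 * (2 * (mIdx N : ℝ) * n) ^ 9 * (mIdx N : ℝ) ^ 2 := by
              apply mul_le_mul_of_nonneg_right _ (by positivity)
              exact mul_le_mul_of_nonneg_left hSn18 (by positivity)
          _ = (3 ^ 18 * Real.exp 1 ^ 2 * (mIdx N : ℝ) ^ 11 * (n : ℝ) ^ 7)
                * (2 ^ 9 * (n : ℝ) ^ 2 / 3 ^ 18) := by ring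
          _ ≤ ((mIdx N : ℝ) - 4) ^ 18 * (2 ^ 9 * (n : ℝ) ^ 2 / 3 ^ 18) :=
              mul_le_mul_of_nonneg_right hcore (by positivity)
          _ = (2 ^ 9 * ((mIdx N : ℝ) - 4) ^ 18 / 3 ^ 18) * (n : ℝ) ^ 2 := by ring
          _ ≤ Ssum x (mIdx N) ^ 18 * (n : ℝ) ^ 2 :=
              mul_le_mul_of_nonneg_right hSm18' (by positivity)
          _ = (Ssum x (mIdx N) ^ 9 * (n : ℝ)) ^ 2 := by ring
      have hAB : Real.exp 1 * (Ssum x n ^ 9 * (mIdx N : ℝ)) ≤ Ssum x (mIdx N) ^ 9 * n :=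
        MIWAux.le_of_sq_le_sq hBpos.le hApos.le hsq2
      have hlogB : Real.log (Real.exp 1 * (Ssum x n ^ 9 * (mIdx N : ℝ)))
          = 1 + (9 * Real.log (Ssum x n) + Real.log (mIdx N : ℝ)) := by
        rw [Real.log_mul (Real.exp_ne_zero 1) (mul_ne_zero (pow_ne_zero 9 hSnpos.ne') hmne),
            Real.log_exp, Real.log_mul (pow_ne_zero 9 hSnpos.ne') hmne, Real.log_pow]
        push_cast
        ring
      have hlogA : Real.log (Ssum x (mIdx N) ^ 9 * n)
          = 9 * Real.log (Ssum x (mIdx N)) + Real.log (n : ℝ) := by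
        rw [Real.log_mul (pow_ne_zero 9 hSmpos.ne') hnne, Real.log_pow]
        push_cast
        ring
      have hlog := Real.log_le_log hBpos hAB
      rw [hlogA, hlogB] at hlog
      clear hsq2 hcore h26 hSm18 hSm18' hSn18 hn7 hAB hlogA hlogB hApos hBpos hk hSn2 hSm h0Sm
      have hE := MIWAux.energy_chain hsys n (mIdx N) hn1 hnm.le hmN1
      have hLd : Real.log ((mIdx N : ℝ) / (n : ℝ)) = Real.log (mIdx N : ℝ) - Real.log (n : ℝ) :=
        Real.log_div hmne hnne
      have hxn2 : 2 / 9 * (1 + Real.log ((mIdx N : ℝ) / (n : ℝ))) ≤ x n ^ 2 := by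
        rw [hLd]
        linarith [hE, hlog, sq_nonneg (x (mIdx N))]
      have h3x : Real.sqrt (2 * (1 + Real.log ((mIdx N : ℝ) / (n : ℝ)))) ≤ 3 * x n := by
        apply MIWAux.sqrt_le_of_sq (by linarith)
        have he : (3 * x n) ^ 2 = 9 * x n ^ 2 := by ring
        rw [he]
        linarith [hxn2]
      linarith
  constructor
  · exact hxbound
  · have hmin : (n : ℝ) * x n ≤ Ssum x n := by
      have h := Finset.card_nsmul_le_sum (Finset.Icc 1 n) x (x n) (fun i hi => by
        rw [Finset.mem_Icc] at hi
        exact MIWAux.x_mono hdec i n hi.1 hi.2 (by omega))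
      simpa [Ssum, Nat.card_Icc, nsmul_eq_mul] using h
    have hmul := mul_le_mul_of_nonneg_left hxbound hn0.le
    calc Ssum x n ≥ (n : ℝ) * x n := hmin
      _ ≥ (n : ℝ) * (1 / 3 * Real.sqrt (2 * (1 + Real.log ((mIdx N : ℝ) / (n : ℝ))))) := hmul
      _ = (n : ℝ) / 3 * Real.sqrt (2 * (1 + Real.log ((mIdx N : ℝ) / (n : ℝ)))) := by ring
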